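/- For any T ∈ ℕ and any sequence (u_t)_{t≥1} with u_t ∈ [0,1], letting U_t = Σ_{ℓ=1}^t u_ℓ, it holds that Σ_{t=0}^T u_{t+1}/max(U_t, 1) ≤ 4 log(U_{T+1} + 1). -/

import Mathlib

open Real Finset

lemma key_step (a b : ℝ) (ha : 0 ≤ a) (hb0 : 0 ≤ b) (hb1 : b ≤ 1) :
    b / max a 1 ≤ 4 * (Real.log (a + b + 1) - Real.log (a + 1)) := by
  have h1 : (0:ℝ) < a + 1 := by linarith
  have h2 : (0:ℝ) < a + b + 1 := by linarith
  have hlog : Real.log ((a + 1) / (a + b + 1)) ≤ (a + 1) / (a + b + 1) - 1 :=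
    Real.log_le_sub_one_of_pos (by positivity)
  rw [Real.log_div (by positivity) (by positivity)] at hlog
  have hdiff : b / (a + b + 1) ≤ Real.log (a + b + 1) - Real.log (a + 1) := by
    have : (a + 1) / (a + b + 1) - 1 = -(b / (a + b + 1)) := by
      field_simp
      ring
    rw [this] at hlog
    linarith
  have hmax : (a + 1) / 2 ≤ max a 1 := by
    rcases le_total a 1 with h | h
    · calc (a+1)/2 ≤ 1 := by linarith
        _ ≤ max a 1 := le_max_right _ _
    · calc (a+1)/2 ≤ a := by linarith
        _ ≤ max a 1 := le_max_left _ _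
  have hmaxpos : (0:ℝ) < max a 1 := lt_of_lt_of_le one_pos (le_max_right _ _)
  have h3 : b / max a 1 ≤ b / ((a + 1) / 2) :=
    div_le_div_of_nonneg_left hb0 (by positivity) hmax
  have h4 : b / ((a + 1) / 2) ≤ 4 * (b / (a + b + 1)) := by
    rw [div_div_eq_mul_div, show 4 * (b / (a + b + 1)) = (4 * b) / (a + b + 1) by ring,
      div_le_div_iff₀ h1 h2]
    nlinarith
  calc b / max a 1 ≤ 4 * (b / (a + b + 1)) := le_trans h3 h4
    _ ≤ 4 * (Real.log (a + b + 1) - Real.log (a + 1)) := by linarith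

/-- Potential-function lemma: for any `T` and any sequence `(u_t)_{t≥1}` with `u_t ∈ [0,1]`,
letting `U_t = Σ_{ℓ=1}^t u_ℓ` (so `U_0 = 0`), we have
`Σ_{t=0}^T u_{t+1}/(U_t ∨ 1) ≤ 4 log(U_{T+1} + 1)`. -/
theorem sum_increment_div_partial_sum_le (T : ℕ) (u : ℕ → ℝ)
    (hu : ∀ t, u t ∈ Set.Icc (0 : ℝ) 1) :
    (∑ t ∈ Finset.range (T + 1),
        u (t + 1) / max (∑ l ∈ Finset.range t, u (l + 1)) 1)
      ≤ 4 * Real.log ((∑ l ∈ Finset.range (T + 1), u (l + 1)) + 1) := by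
  induction T with
  | zero =>
    simp only [zero_add, Finset.sum_range_one, Finset.sum_range_zero]
    have h := key_step 0 (u 1) le_rfl (hu 1).1 (hu 1).2
    simp only [zero_add, Real.log_one, sub_zero] at h
    exact h
  | succ T ih =>
    rw [Finset.sum_range_succ, Finset.sum_range_succ (f := fun l => u (l + 1)) (n := T + 1)]
    have ha : 0 ≤ ∑ l ∈ Finset.range (T + 1), u (l + 1) :=
      Finset.sum_nonneg fun l _ => (hu (l + 1)).1
    have h := key_step (∑ l ∈ Finset.range (T + 1), u (l + 1)) (u (T + 2)) ha
      (hu (T + 2)).1 (hu (T + 2)).2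
    linarith
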